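/- Let m, d, ħ > 0, v ∈ ℝ and t ∈ ℝ, and let Ψ(r,t; m,v,d) be the free Gaussian wave packet. Then the position expectation value is ∫_ℝ r |Ψ(r,t; m,v,d)|² dr = t·v, and its variance spreads according to σ²(t) := ∫_ℝ (r − tv)² |Ψ(r,t; m,v,d)|² dr = d² + t²ħ²/(4d²m²). In particular, the spreading of the wave packet is negligible, σ²(t) ≤ 2d², for all times |t| ≤ 2d²m/ħ. -/

import Mathlib

open MeasureTheory

noncomputable section

/-- The free Gaussian wave packet `Ψ(r,t; m,v,d)` with reduced Planck constant `hbar`;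
the square root is the principal branch. -/
noncomputable def gaussPacket (hbar m v d : ℝ) (r t : ℝ) : ℂ :=
  (((2 / Real.pi) ^ ((1 : ℝ) / 4) : ℝ) : ℂ) *
    (((d * m : ℝ) : ℂ) / ((2 * d ^ 2 * m : ℝ) + Complex.I * t * hbar)) ^ ((1 : ℂ) / 2) *
    Complex.exp ((-(d ^ 2 * m ^ 2 * (r - t * v) ^ 2) /
      (4 * d ^ 4 * m ^ 2 + t ^ 2 * hbar ^ 2) : ℝ) : ℂ) *
    Complex.exp (Complex.I *
      (((m * t * r ^ 2 * hbar ^ 2 - 4 * d ^ 4 * m ^ 3 * v * (t * v - 2 * r)) /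
        (8 * d ^ 4 * m ^ 2 * hbar + 2 * t ^ 2 * hbar ^ 3) : ℝ) : ℂ))

namespace GaussPacketAux

open Real Filter Asymptotics

lemma tendsto_exp_neg_mul_sq_atTop {b : ℝ} (hb : 0 < b) :
    Tendsto (fun x : ℝ => Real.exp (-b * x ^ 2)) atTop (nhds 0) :=
  Real.tendsto_exp_atBot.comp
    ((tendsto_pow_atTop two_ne_zero).const_mul_atTop_of_neg (neg_lt_zero.2 hb))

lemma tendsto_mul_exp_neg_mul_sq_atTop {b : ℝ} (hb : 0 < b) :
    Tendsto (fun x : ℝ => x * Real.exp (-b * x ^ 2)) atTop (nhds 0) := by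
  have h := (rpow_mul_exp_neg_mul_sq_isLittleO_exp_neg hb 1).trans_tendsto
    (Real.tendsto_exp_atBot.comp
      (tendsto_id.const_mul_atTop_of_neg (by norm_num : -((1:ℝ)/2) < 0)))
  simpa [Real.rpow_one] using h

lemma integrable_sq_mul_exp_neg_mul_sq {b : ℝ} (hb : 0 < b) :
    Integrable fun x : ℝ => x ^ 2 * Real.exp (-b * x ^ 2) := by
  have := integrable_rpow_mul_exp_neg_mul_sq hb (by norm_num : (-1:ℝ) < 2)
  have e : ∀ x : ℝ, x ^ (2:ℝ) = x ^ (2:ℕ) := fun x => by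
    rw [← Real.rpow_natCast x 2]; norm_num
  simpa [e] using this

lemma integral_sq_mul_exp_neg_mul_sq {b : ℝ} (hb : 0 < b) :
    ∫ x : ℝ, x ^ 2 * Real.exp (-b * x ^ 2) = Real.sqrt (Real.pi / b) / (2 * b) := by
  have hderiv : ∀ x : ℝ, HasDerivAt (fun y : ℝ => y * Real.exp (-b * y ^ 2))
      (Real.exp (-b * x ^ 2) - 2 * b * (x ^ 2 * Real.exp (-b * x ^ 2))) x := by
    intro x
    have h1 : HasDerivAt (fun y : ℝ => -b * y ^ 2) (-b * (2 * x)) x :=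
      (hasDerivAt_pow 2 x).const_mul (-b) |>.congr_deriv (by ring)
    have : HasDerivAt (fun y : ℝ => y * Real.exp (-b * y ^ 2))
        (1 * Real.exp (-b * x ^ 2) + id x * (Real.exp (-b * x ^ 2) * (-b * (2 * x)))) x :=
      (hasDerivAt_id x).mul h1.exp
    convert this using 1
    simp only [id_eq]
    ring
  have htop := tendsto_mul_exp_neg_mul_sq_atTop hb
  have hbot : Tendsto (fun x : ℝ => x * Real.exp (-b * x ^ 2)) atBot (nhds 0) := by
    have := (htop.comp tendsto_neg_atBot_atTop).neg
    simp only [Function.comp] at this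
    simpa [neg_mul, neg_neg] using this
  have hint : Integrable fun x : ℝ =>
      Real.exp (-b * x ^ 2) - 2 * b * (x ^ 2 * Real.exp (-b * x ^ 2)) :=
    (integrable_exp_neg_mul_sq hb).sub ((integrable_sq_mul_exp_neg_mul_sq hb).const_mul _)
  have h0 := integral_of_hasDerivAt_of_tendsto hderiv hint hbot htop
  rw [sub_zero] at h0
  rw [integral_sub (integrable_exp_neg_mul_sq hb)
    ((integrable_sq_mul_exp_neg_mul_sq hb).const_mul _), integral_const_mul,
    integral_gaussian] at h0
  have : (2 * b) * ∫ x : ℝ, x ^ 2 * Real.exp (-b * x ^ 2) = Real.sqrt (Real.pi / b) := by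
    linarith
  field_simp at this ⊢
  linarith

lemma integral_self_mul_exp_neg_mul_sq {b : ℝ} (hb : 0 < b) :
    ∫ x : ℝ, x * Real.exp (-b * x ^ 2) = 0 := by
  have hderiv : ∀ x : ℝ, HasDerivAt (fun y : ℝ => -(2 * b)⁻¹ * Real.exp (-b * y ^ 2))
      (x * Real.exp (-b * x ^ 2)) x := by
    intro x
    have h1 : HasDerivAt (fun y : ℝ => -b * y ^ 2) (-b * (2 * x)) x :=
      (hasDerivAt_pow 2 x).const_mul (-b) |>.congr_deriv (by ring)
    have : HasDerivAt (fun y : ℝ => -(2 * b)⁻¹ * Real.exp (-b * y ^ 2))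
        (-(2 * b)⁻¹ * (Real.exp (-b * x ^ 2) * (-b * (2 * x)))) x :=
      h1.exp.const_mul (-(2 * b)⁻¹)
    convert this using 1
    have hinv := inv_mul_cancel₀ (by positivity : (2 * b : ℝ) ≠ 0)
    linear_combination (-(x * Real.exp (-b * x ^ 2))) * hinv
  have htop : Tendsto (fun x : ℝ => -(2 * b)⁻¹ * Real.exp (-b * x ^ 2)) atTop (nhds 0) := by
    simpa using (tendsto_exp_neg_mul_sq_atTop hb).const_mul (-(2 * b)⁻¹)
  have hbot : Tendsto (fun x : ℝ => -(2 * b)⁻¹ * Real.exp (-b * x ^ 2)) atBot (nhds 0) := by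
    have := htop.comp tendsto_neg_atBot_atTop
    simpa [Function.comp_def, neg_sq] using this
  have := integral_of_hasDerivAt_of_tendsto hderiv (integrable_mul_exp_neg_mul_sq hb) hbot htop
  simpa using this

lemma abs_sq_gaussPacket {hbar m d : ℝ} (hhbar : 0 < hbar) (hm : 0 < m) (hd : 0 < d)
    (v t r : ℝ) :
    ‖gaussPacket hbar m v d r t‖ ^ 2 =
      Real.sqrt ((2 * d ^ 2 * m ^ 2 / (4 * d ^ 4 * m ^ 2 + t ^ 2 * hbar ^ 2)) / Real.pi) *
        Real.exp (-(2 * d ^ 2 * m ^ 2 / (4 * d ^ 4 * m ^ 2 + t ^ 2 * hbar ^ 2)) *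
          (r - t * v) ^ 2) := by
  set A : ℝ := 4 * d ^ 4 * m ^ 2 + t ^ 2 * hbar ^ 2 with hA_def
  have hA : 0 < A := by positivity
  set z : ℂ := (((d * m : ℝ) : ℂ) / ((2 * d ^ 2 * m : ℝ) + Complex.I * t * hbar)) with hz_def
  have hden : (((2 * d ^ 2 * m : ℝ) : ℂ) + Complex.I * t * hbar) ≠ 0 := by
    intro h
    have := congrArg Complex.re h
    simp only [Complex.add_re, Complex.ofReal_re, Complex.mul_re, Complex.mul_im,
      Complex.I_re, Complex.I_im, Complex.ofReal_im, Complex.zero_re] at this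
    ring_nf at this
    nlinarith [mul_pos (pow_pos hd 2) hm]
  have hznum : ((d * m : ℝ) : ℂ) ≠ 0 := by
    simp only [ne_eq, Complex.ofReal_eq_zero]
    positivity
  have hz0 : z ≠ 0 := div_ne_zero hznum hden
  have habsz : ‖z‖ = d * m / Real.sqrt A := by
    rw [hz_def, norm_div, Complex.norm_of_nonneg (by positivity)]
    congr 1
    have e : (((2 * d ^ 2 * m : ℝ) : ℂ) + Complex.I * t * hbar)
        = ((2 * d ^ 2 * m : ℝ) : ℂ) + ((t * hbar : ℝ) : ℂ) * Complex.I := by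
      push_cast; ring
    rw [e, Complex.norm_add_mul_I]
    congr 1
    rw [hA_def]; ring
  have e1 : ‖((((2 / Real.pi) ^ ((1:ℝ)/4) : ℝ) : ℂ))‖ = (2 / Real.pi) ^ ((1:ℝ)/4) := by
    rw [Complex.norm_of_nonneg (by positivity)]
  have e2 : ‖z ^ ((1:ℂ)/2)‖ = (d * m / Real.sqrt A) ^ ((1:ℝ)/2) := by
    rw [Complex.norm_cpow_of_ne_zero hz0, habsz]
    norm_num
  have e3 : ∀ x : ℝ, ‖Complex.exp ((x : ℂ))‖ = Real.exp x := fun x => by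
    rw [Complex.norm_exp, Complex.ofReal_re]
  have e4 : ∀ x : ℝ, ‖Complex.exp (Complex.I * (x : ℂ))‖ = 1 := fun x => by
    rw [Complex.norm_exp]
    simp
  unfold gaussPacket
  rw [← hz_def, ← hA_def, norm_mul, norm_mul, norm_mul, e1, e2, e3, e4, mul_one]
  rw [mul_pow, mul_pow]
  rw [← Real.rpow_natCast ((2/Real.pi) ^ ((1:ℝ)/4)) 2, ← Real.rpow_mul (by positivity)]
  rw [← Real.rpow_natCast ((d*m/Real.sqrt A) ^ ((1:ℝ)/2)) 2, ← Real.rpow_mul (by positivity)]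
  norm_num
  have hcoef : Real.sqrt (2 * d ^ 2 * m ^ 2 / A / Real.pi)
      = (2 / Real.pi) ^ ((1:ℝ)/2) * (d * m / Real.sqrt A) := by
    have h1 : Real.sqrt ((d * m) ^ 2 / A) = d * m / Real.sqrt A := by
      rw [Real.sqrt_div (by positivity) A, Real.sqrt_sq (by positivity)]
    rw [show 2 * d ^ 2 * m ^ 2 / A / Real.pi = (2 / Real.pi) * ((d * m) ^ 2 / A) by
        field_simp,
      Real.sqrt_mul (by positivity), h1, Real.sqrt_eq_rpow]
  have hexp : (Real.exp (-(d ^ 2 * m ^ 2 * (r - t * v) ^ 2) / A)) ^ 2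
      = Real.exp (-(2 * d ^ 2 * m ^ 2 / A) * (r - t * v) ^ 2) := by
    rw [sq, ← Real.exp_add]
    congr 1
    field_simp
    ring
  rw [hexp, hcoef]
  ring

end GaussPacketAux

/-- Position expectation value and spreading variance of the free Gaussian wave packet;
the spreading is negligible (`σ²(t) ≤ 2d²`) for `|t| ≤ 2d²m/ħ`. -/
theorem gaussPacket_spreading
    {hbar m d : ℝ} (hhbar : 0 < hbar) (hm : 0 < m) (hd : 0 < d) (v t : ℝ) :
    (∫ r : ℝ, r * ‖gaussPacket hbar m v d r t‖ ^ 2 = t * v) ∧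
    (∫ r : ℝ, (r - t * v) ^ 2 * ‖gaussPacket hbar m v d r t‖ ^ 2 =
      d ^ 2 + t ^ 2 * hbar ^ 2 / (4 * d ^ 2 * m ^ 2)) ∧
    (|t| ≤ 2 * d ^ 2 * m / hbar →
      ∫ r : ℝ, (r - t * v) ^ 2 * ‖gaussPacket hbar m v d r t‖ ^ 2 ≤
        2 * d ^ 2) := by
  have hA : (0:ℝ) < 4 * d ^ 4 * m ^ 2 + t ^ 2 * hbar ^ 2 := by positivity
  set b : ℝ := 2 * d ^ 2 * m ^ 2 / (4 * d ^ 4 * m ^ 2 + t ^ 2 * hbar ^ 2) with hb_def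
  have hb : 0 < b := by positivity
  set C : ℝ := Real.sqrt (b / Real.pi) with hC_def
  have key : ∀ r : ℝ, ‖gaussPacket hbar m v d r t‖ ^ 2
      = C * Real.exp (-b * (r - t * v) ^ 2) := fun r =>
    GaussPacketAux.abs_sq_gaussPacket hhbar hm hd v t r
  have hC1 : C * Real.sqrt (Real.pi / b) = 1 := by
    rw [hC_def, ← Real.sqrt_mul (by positivity),
      show b / Real.pi * (Real.pi / b) = 1 by field_simp, Real.sqrt_one]
  -- First moment
  have int1 : ∫ r : ℝ, r * ‖gaussPacket hbar m v d r t‖ ^ 2 = t * v := by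
    simp_rw [key]
    have hfun : (fun r : ℝ => r * (C * Real.exp (-b * (r - t * v) ^ 2)))
        = fun r : ℝ => (fun x : ℝ => C * (x * Real.exp (-b * x ^ 2))
            + (C * (t * v)) * Real.exp (-b * x ^ 2)) (r - t * v) := by
      funext r
      simp only
      ring
    rw [hfun, integral_sub_right_eq_self
      (fun x : ℝ => C * (x * Real.exp (-b * x ^ 2)) + (C * (t * v)) * Real.exp (-b * x ^ 2))
      (t * v),
      integral_add ((integrable_mul_exp_neg_mul_sq hb).const_mul C)
        ((integrable_exp_neg_mul_sq hb).const_mul _),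
      integral_const_mul, integral_const_mul,
      GaussPacketAux.integral_self_mul_exp_neg_mul_sq hb, integral_gaussian]
    rw [mul_zero, zero_add]
    calc C * (t * v) * Real.sqrt (Real.pi / b)
        = (C * Real.sqrt (Real.pi / b)) * (t * v) := by ring
      _ = t * v := by rw [hC1, one_mul]
  -- Second moment
  have int2 : ∫ r : ℝ, (r - t * v) ^ 2 * ‖gaussPacket hbar m v d r t‖ ^ 2
      = d ^ 2 + t ^ 2 * hbar ^ 2 / (4 * d ^ 2 * m ^ 2) := by
    simp_rw [key]
    have hfun : (fun r : ℝ => (r - t * v) ^ 2 * (C * Real.exp (-b * (r - t * v) ^ 2)))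
        = fun r : ℝ => (fun x : ℝ => C * (x ^ 2 * Real.exp (-b * x ^ 2))) (r - t * v) := by
      funext r
      simp only
      ring
    rw [hfun, integral_sub_right_eq_self
      (fun x : ℝ => C * (x ^ 2 * Real.exp (-b * x ^ 2))) (t * v),
      integral_const_mul, GaussPacketAux.integral_sq_mul_exp_neg_mul_sq hb]
    have : C * (Real.sqrt (Real.pi / b) / (2 * b)) = 1 / (2 * b) := by
      rw [mul_div_assoc', hC1]
    rw [this, hb_def]
    rw [div_eq_iff (by positivity)]
    field_simp
    ring
  refine ⟨int1, int2, fun ht => ?_⟩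
  rw [int2]
  have h1 : |t| * hbar ≤ 2 * d ^ 2 * m := by
    rw [div_eq_mul_inv] at ht
    calc |t| * hbar ≤ (2 * d ^ 2 * m * hbar⁻¹) * hbar :=
          mul_le_mul_of_nonneg_right ht hhbar.le
      _ = 2 * d ^ 2 * m := by field_simp
  have h2 : t ^ 2 * hbar ^ 2 ≤ 4 * d ^ 4 * m ^ 2 := by
    nlinarith [sq_abs t, abs_nonneg t, mul_nonneg (abs_nonneg t) hhbar.le]
  have h3 : t ^ 2 * hbar ^ 2 / (4 * d ^ 2 * m ^ 2) ≤ d ^ 2 := by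
    rw [div_le_iff₀ (by positivity)]
    nlinarith
  linarith
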